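/- The function ψ(t) = |t|^{1/2} satisfies the Strichartz regularity (Carleson measure) condition: there is a finite constant C such that sup over a ∈ ℝ and h > 0 of h^{-1} ∫_{a-h}^{a+h} ∫_{a-h}^{a+h} |ψ(t) - ψ(s)|² / |t-s|² ds dt ≤ C. -/

import Mathlib

open MeasureTheory

noncomputable def dfun (s : ℝ) : ℝ := (Real.sqrt |s|)⁻¹

lemma dfun_nonneg (s : ℝ) : 0 ≤ dfun s := inv_nonneg.2 (Real.sqrt_nonneg _)

lemma dfun_neg (s : ℝ) : dfun (-s) = dfun s := by simp [dfun]

lemma dfun_eqOn (b : ℝ) :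
    Set.EqOn dfun (fun x : ℝ => x ^ (-(1/2) : ℝ)) (Set.Ioc 0 b) := by
  intro x hx
  have hx0 : 0 < x := hx.1
  simp only [dfun]
  rw [abs_of_pos hx0, Real.rpow_neg hx0.le, Real.sqrt_eq_rpow]

lemma dfun_integrableOn_Ioc (b : ℝ) (hb : 0 ≤ b) :
    IntegrableOn dfun (Set.Ioc 0 b) := by
  have h1 : IntervalIntegrable (fun x : ℝ => x ^ (-(1/2) : ℝ)) volume 0 b :=
    intervalIntegral.intervalIntegrable_rpow' (by norm_num)
  have h2 : IntegrableOn (fun x : ℝ => x ^ (-(1/2) : ℝ)) (Set.Ioc 0 b) := by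
    rw [intervalIntegrable_iff, Set.uIoc_of_le hb] at h1
    exact h1
  exact h2.congr_fun (fun x hx => ((dfun_eqOn b) hx).symm) measurableSet_Ioc

lemma dfun_integral_Ioc (b : ℝ) (hb : 0 ≤ b) :
    ∫ s in Set.Ioc 0 b, dfun s = 2 * Real.sqrt b := by
  rw [setIntegral_congr_fun measurableSet_Ioc (dfun_eqOn b),
    ← intervalIntegral.integral_of_le hb,
    integral_rpow (Or.inl (by norm_num : (-1:ℝ) < -(1/2)))]
  have h1 : (-(1/2:ℝ)) + 1 = 1/2 := by norm_num
  rw [h1, Real.zero_rpow (by norm_num), Real.sqrt_eq_rpow]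
  ring

lemma dfun_intervalIntegrable_pos (b : ℝ) (hb : 0 ≤ b) :
    IntervalIntegrable dfun volume 0 b := by
  rw [intervalIntegrable_iff, Set.uIoc_of_le hb]
  exact dfun_integrableOn_Ioc b hb

lemma dfun_intervalIntegrable_neg (b : ℝ) (hb : 0 ≤ b) :
    IntervalIntegrable dfun volume (-b) 0 := by
  have h1 : IntervalIntegrable (fun x => dfun (-x)) volume (-b) (-0) :=
    (IntervalIntegrable.iff_comp_neg (f := dfun)).mp (dfun_intervalIntegrable_pos b hb).symm
  simp only [dfun_neg, neg_zero] at h1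
  exact h1

lemma dfun_intervalIntegrable (b : ℝ) (hb : 0 ≤ b) :
    IntervalIntegrable dfun volume (-b) b :=
  (dfun_intervalIntegrable_neg b hb).trans (dfun_intervalIntegrable_pos b hb)

lemma dfun_integrableOn_symm (b : ℝ) (hb : 0 ≤ b) :
    IntegrableOn dfun (Set.Ioc (-b) b) := by
  have h1 := dfun_intervalIntegrable b hb
  rwa [intervalIntegrable_iff, Set.uIoc_of_le (by linarith : (-b) ≤ b)] at h1

lemma dfun_integral_symm (b : ℝ) (hb : 0 ≤ b) :
    ∫ s in Set.Ioc (-b) b, dfun s = 4 * Real.sqrt b := by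
  have hneg : ∫ x in (-b)..0, dfun x = ∫ x in (0:ℝ)..b, dfun x := by
    have h0 := intervalIntegral.integral_comp_neg (a := -b) (b := 0) (f := dfun)
    simp only [dfun_neg, neg_zero, neg_neg] at h0
    exact h0
  have h2 : ∫ x in (0:ℝ)..b, dfun x = 2 * Real.sqrt b := by
    rw [intervalIntegral.integral_of_le hb]
    exact dfun_integral_Ioc b hb
  calc ∫ s in Set.Ioc (-b) b, dfun s = ∫ x in (-b)..b, dfun x := by
        rw [intervalIntegral.integral_of_le (by linarith : (-b) ≤ b)]
  _ = (∫ x in (-b)..0, dfun x) + ∫ x in (0:ℝ)..b, dfun x :=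
        (intervalIntegral.integral_add_adjacent_intervals
          (dfun_intervalIntegrable_neg b hb) (dfun_intervalIntegrable_pos b hb)).symm
  _ = 4 * Real.sqrt b := by rw [hneg, h2]; ring

lemma strich_f_nonneg (t s : ℝ) :
    0 ≤ (Real.sqrt |t| - Real.sqrt |s|) ^ 2 / |t - s| ^ 2 :=
  div_nonneg (sq_nonneg _) (sq_nonneg _)

lemma strich_lemA (t s : ℝ) :
    ((Real.sqrt |t| - Real.sqrt |s|) ^ 2 / |t - s| ^ 2) * (|t| + |s|) ≤ 1 := by
  rcases eq_or_ne t s with rfl | hts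
  · simp
  · have hd : 0 < |t - s| := abs_pos.2 (sub_ne_zero.2 hts)
    have ht : Real.sqrt |t| ^ 2 = |t| := Real.sq_sqrt (abs_nonneg t)
    have hs : Real.sqrt |s| ^ 2 = |s| := Real.sq_sqrt (abs_nonneg s)
    have h1 : |(|t| - |s|)| ≤ |t - s| := abs_abs_sub_abs_le_abs_sub t s
    have h2 : (|t| - |s|) ^ 2 ≤ |t - s| ^ 2 := by
      calc (|t| - |s|) ^ 2 = |(|t| - |s|)| ^ 2 := (sq_abs _).symm
      _ ≤ |t - s| ^ 2 := pow_le_pow_left₀ (abs_nonneg _) h1 2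
    have key : (Real.sqrt |t| - Real.sqrt |s|) ^ 2 *
        (|t| + |s|) ≤ |t - s| ^ 2 := by
      nlinarith [ht, hs, h2, mul_nonneg (sq_nonneg (Real.sqrt |t| - Real.sqrt |s|))
        (mul_nonneg (Real.sqrt_nonneg |t|) (Real.sqrt_nonneg |s|))]
    rw [div_mul_eq_mul_div, div_le_one (pow_pos hd 2)]
    exact key

lemma strich_f_le_inv (t s c : ℝ) (hc : 0 < c) (hcs : c ≤ |t| + |s|) :
    (Real.sqrt |t| - Real.sqrt |s|) ^ 2 / |t - s| ^ 2 ≤ c⁻¹ := by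
  have hf := strich_f_nonneg t s
  have h1 : ((Real.sqrt |t| - Real.sqrt |s|) ^ 2 / |t - s| ^ 2) * c ≤ 1 :=
    le_trans (mul_le_mul_of_nonneg_left hcs hf) (strich_lemA t s)
  rw [← one_div, le_div_iff₀ hc]
  exact h1

lemma strich_f_le_dfun (t s : ℝ) (ht : t ≠ 0) (hs : s ≠ 0) :
    (Real.sqrt |t| - Real.sqrt |s|) ^ 2 / |t - s| ^ 2 ≤ 1/2 * dfun t * dfun s := by
  have ht0 : 0 < Real.sqrt |t| := Real.sqrt_pos.2 (abs_pos.2 ht)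
  have hs0 : 0 < Real.sqrt |s| := Real.sqrt_pos.2 (abs_pos.2 hs)
  have hc : 0 < 2 * Real.sqrt |t| * Real.sqrt |s| := by positivity
  have hcs : 2 * Real.sqrt |t| * Real.sqrt |s| ≤ |t| + |s| := by
    nlinarith [sq_nonneg (Real.sqrt |t| - Real.sqrt |s|), Real.sq_sqrt (abs_nonneg t),
      Real.sq_sqrt (abs_nonneg s)]
  have := strich_f_le_inv t s _ hc hcs
  calc (Real.sqrt |t| - Real.sqrt |s|) ^ 2 / |t - s| ^ 2
      ≤ (2 * Real.sqrt |t| * Real.sqrt |s|)⁻¹ := this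
  _ = 1/2 * dfun t * dfun s := by
      rw [dfun, dfun, mul_inv, mul_inv]
      ring

/-- the function `ψ(t) = |t|^{1/2}` satisfies the Strichartz regularity
(Carleson measure) condition: there is a finite constant `C` with
`h⁻¹ ∫_{a-h}^{a+h} ∫_{a-h}^{a+h} |ψ(t)-ψ(s)|²/|t-s|² ds dt ≤ C` for all `a ∈ ℝ`, `h > 0`. -/
theorem sqrt_abs_strichartz_condition :
    ∃ C : ℝ, ∀ a h : ℝ, 0 < h →
      (1 / h) * ∫ t in Set.Ioo (a - h) (a + h),
          ∫ s in Set.Ioo (a - h) (a + h),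
            (Real.sqrt |t| - Real.sqrt |s|) ^ 2 / |t - s| ^ 2 ≤ C := by
  use 24
  intro a h hh
  set S : Set ℝ := Set.Ioo (a - h) (a + h) with hS
  have hSmeas : MeasurableSet S := hS ▸ measurableSet_Ioo
  have hvolS : (volume S).toReal = 2 * h := by
    rw [hS, Real.volume_Ioo, ENNReal.toReal_ofReal (by linarith)]
    ring
  have hvolSlt : volume S < ⊤ := by
    rw [hS, Real.volume_Ioo]; exact ENNReal.ofReal_lt_top
  have hfnn : ∀ t : ℝ,
      0 ≤ ∫ s in S, (Real.sqrt |t| - Real.sqrt |s|) ^ 2 / |t - s| ^ 2 :=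
    fun t => integral_nonneg fun s => strich_f_nonneg t s
  have hne : ∀ᵐ x : ℝ, x ≠ 0 := by
    rw [ae_iff]
    simp only [not_not, Set.setOf_eq_eq_singleton]
    exact Real.volume_singleton
  have hIle : (∫ t in S, ∫ s in S,
      (Real.sqrt |t| - Real.sqrt |s|) ^ 2 / |t - s| ^ 2) ≤ 24 * h := by
    rcases le_or_gt |a| (2 * h) with hcase | hcase
    · -- |a| ≤ 2h : use the 1/(2√|t|√|s|) bound
      have h3 : (0:ℝ) ≤ 3 * h := by linarith
      have hsub : S ⊆ Set.Ioc (-(3 * h)) (3 * h) := by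
        intro x hx
        rw [hS] at hx
        rcases abs_le.1 hcase with ⟨hc1, hc2⟩
        exact ⟨by linarith [hx.1], by linarith [hx.2]⟩
      have hTint : IntegrableOn dfun (Set.Ioc (-(3 * h)) (3 * h)) :=
        dfun_integrableOn_symm (3 * h) h3
      have hSint : IntegrableOn dfun S := hTint.mono_set hsub
      have hK : ∫ s in Set.Ioc (-(3 * h)) (3 * h), dfun s = 4 * Real.sqrt (3 * h) :=
        dfun_integral_symm (3 * h) h3
      set K := 4 * Real.sqrt (3 * h) with hKdef
      have hK0 : 0 ≤ K := by rw [hKdef]; positivity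
      have hSmono : ∫ s in S, dfun s ≤ K := by
        rw [← hK]
        exact setIntegral_mono_set hTint
          (Filter.Eventually.of_forall fun s => dfun_nonneg s)
          (HasSubset.Subset.eventuallyLE hsub)
      have inner : ∀ t : ℝ, t ≠ 0 →
          (∫ s in S, (Real.sqrt |t| - Real.sqrt |s|) ^ 2 / |t - s| ^ 2)
            ≤ (1/2 * K) * dfun t := by
        intro t ht
        calc ∫ s in S, (Real.sqrt |t| - Real.sqrt |s|) ^ 2 / |t - s| ^ 2
            ≤ ∫ s in S, 1/2 * dfun t * dfun s := by
              refine integral_mono_of_nonneg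
                (Filter.Eventually.of_forall fun s => strich_f_nonneg t s)
                (hSint.const_mul (1/2 * dfun t)) ?_
              filter_upwards [ae_restrict_of_ae hne] with s hs
              exact strich_f_le_dfun t s ht hs
        _ = 1/2 * dfun t * ∫ s in S, dfun s := integral_const_mul _ _
        _ ≤ (1/2 * K) * dfun t := by
              have hd : (0:ℝ) ≤ 1/2 * dfun t := by
                have := dfun_nonneg t; linarith
              have h4 : 1/2 * dfun t * ∫ s in S, dfun s ≤ 1/2 * dfun t * K :=
                mul_le_mul_of_nonneg_left hSmono hd
              have h5 : (1/2 * K) * dfun t = 1/2 * dfun t * K := by ring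
              linarith
      have outer : (∫ t in S, ∫ s in S,
          (Real.sqrt |t| - Real.sqrt |s|) ^ 2 / |t - s| ^ 2)
            ≤ (1/2 * K) * ∫ t in S, dfun t := by
        calc (∫ t in S, ∫ s in S,
            (Real.sqrt |t| - Real.sqrt |s|) ^ 2 / |t - s| ^ 2)
            ≤ ∫ t in S, (1/2 * K) * dfun t := by
              refine integral_mono_of_nonneg
                (Filter.Eventually.of_forall hfnn) (hSint.const_mul (1/2 * K)) ?_
              filter_upwards [ae_restrict_of_ae hne] with t ht
              exact inner t ht
        _ = (1/2 * K) * ∫ t in S, dfun t := integral_const_mul _ _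
      have hKK : 1/2 * K * K = 24 * h := by
        rw [hKdef]
        nlinarith [Real.sq_sqrt h3]
      have h5 : (1/2 * K) * ∫ t in S, dfun t ≤ 1/2 * K * K :=
        mul_le_mul_of_nonneg_left hSmono (mul_nonneg (by norm_num) hK0)
      linarith
    · -- 2h < |a| : the integrand is bounded by (2h)⁻¹
      have habs : ∀ t ∈ S, h ≤ |t| := by
        intro t htS
        rw [hS] at htS
        have h1 : |a - t| < h := abs_sub_lt_iff.2 ⟨by linarith [htS.1], by linarith [htS.2]⟩
        have h2 : |a| - |t| ≤ |a - t| := abs_sub_abs_le_abs_sub a t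
        linarith
      have hinner : ∀ t ∈ S, (∫ s in S,
          (Real.sqrt |t| - Real.sqrt |s|) ^ 2 / |t - s| ^ 2) ≤ 1 := by
        intro t htS
        calc (∫ s in S, (Real.sqrt |t| - Real.sqrt |s|) ^ 2 / |t - s| ^ 2)
            ≤ ∫ _s in S, (2 * h)⁻¹ := by
              refine integral_mono_of_nonneg
                (Filter.Eventually.of_forall fun s => strich_f_nonneg t s)
                (integrableOn_const hvolSlt.ne) ?_
              refine (ae_restrict_iff' hSmeas).2 (Filter.Eventually.of_forall fun s hsS => ?_)
              exact strich_f_le_inv t s (2 * h) (by linarith)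
                (by linarith [habs t htS, habs s hsS])
        _ = (volume S).toReal * (2 * h)⁻¹ := by rw [setIntegral_const, smul_eq_mul, Measure.real]
        _ = 1 := by rw [hvolS]; field_simp
      calc (∫ t in S, ∫ s in S,
          (Real.sqrt |t| - Real.sqrt |s|) ^ 2 / |t - s| ^ 2)
          ≤ ∫ _t in S, (1:ℝ) := by
            refine integral_mono_of_nonneg
              (Filter.Eventually.of_forall hfnn)
              (integrableOn_const hvolSlt.ne) ?_
            exact (ae_restrict_iff' hSmeas).2 (Filter.Eventually.of_forall hinner)
      _ = (volume S).toReal * 1 := by rw [setIntegral_const, smul_eq_mul, Measure.real]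
      _ = 2 * h := by rw [hvolS]; ring
      _ ≤ 24 * h := by linarith
  calc (1 / h) * ∫ t in S, ∫ s in S,
      (Real.sqrt |t| - Real.sqrt |s|) ^ 2 / |t - s| ^ 2
      ≤ (1 / h) * (24 * h) := by
        apply mul_le_mul_of_nonneg_left hIle (by positivity)
  _ = 24 := by field_simp
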